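/- The exponential parametrization is bijective with a polynomial inverse: the map t ↦ ψ = exp(T(t))·e_{[d]} from cluster amplitudes to Fock space coordinates is a bijection from ℂ^{2^n−1} onto the affine chart {ψ_{[d]} = 1}, and each inverse coordinate t_{I,B} is a polynomial in the ψ-coordinates of strictly lower or equal level. -/

import Mathlib

open Finset

/-- The reference set `[d] ⊆ [n]`. -/
def refSet (n d : ℕ) : Finset (Fin n) := Finset.univ.filter (fun i => (i : ℕ) < d)

/-- Matrix of the creation operator `a_p^†` on the Fock space, in the basis of
occupation number states indexed by subsets of `[n]`. -/
def creMat (n : ℕ) (p : Fin n) : Matrix (Finset (Fin n)) (Finset (Fin n)) ℂ :=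
  fun K J => if p ∉ J ∧ K = insert p J then (-1 : ℂ) ^ (J.filter (· < p)).card else 0

/-- Matrix of the annihilation operator `a_p` on the Fock space. -/
def annMat (n : ℕ) (p : Fin n) : Matrix (Finset (Fin n)) (Finset (Fin n)) ℂ :=
  fun K J => if p ∈ J ∧ K = J.erase p then (-1 : ℂ) ^ (J.filter (· < p)).card else 0

/-- The normal ordered monomial `a_B^† a_I = a_{b_ℓ}^† ⋯ a_{b_1}^† a_{i_1} ⋯ a_{i_m}`
(creations in decreasing order, annihilations in increasing order). -/
noncomputable def exMon (n : ℕ) (I B : Finset (Fin n)) :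
    Matrix (Finset (Fin n)) (Finset (Fin n)) ℂ :=
  ((B.sort (· ≤ ·)).reverse.map (creMat n)).prod *
    ((I.sort (· ≤ ·)).map (annMat n)).prod

/-- The cluster matrix `T(t) = ∑_{I ⊆ [d], B ⊆ [n]\[d], |I|+|B|>0} t_{I,B} a_B^† a_I`. -/
noncomputable def clusterMat (n d : ℕ) (t : Finset (Fin n) × Finset (Fin n) → ℂ) :
    Matrix (Finset (Fin n)) (Finset (Fin n)) ℂ :=
  ∑ p ∈ Finset.univ.filter
      (fun p : Finset (Fin n) × Finset (Fin n) =>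
        p.1 ⊆ refSet n d ∧ p.2 ⊆ (refSet n d)ᶜ ∧ p ≠ (∅, ∅)),
    t p • exMon n p.1 p.2

/-- The (truncated, hence exact for nilpotent arguments) matrix exponential
`∑_{k=0}^{n} A^k/k!`. -/
noncomputable def expMat (n : ℕ) (A : Matrix (Finset (Fin n)) (Finset (Fin n)) ℂ) :
    Matrix (Finset (Fin n)) (Finset (Fin n)) ℂ :=
  ∑ k ∈ Finset.range (n + 1), ((k.factorial : ℂ))⁻¹ • A ^ k

/-- The exponential parametrization `t ↦ ψ = exp(T(t))·e_{[d]}` in Plücker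
coordinates: `ψ_J` is the `(J, [d])` entry of `exp(T(t))`. -/
noncomputable def ccPsi (n d : ℕ) (t : Finset (Fin n) × Finset (Fin n) → ℂ) :
    Finset (Fin n) → ℂ :=
  fun J => expMat n (clusterMat n d t) J (refSet n d)

/-- Cluster amplitudes: functions supported on the valid index pairs `(I,B)` with
`I ⊆ [d]`, `B ⊆ [n]\[d]`, `|I|+|B| > 0`. -/
def Amplitudes (n d : ℕ) :=
  {t : Finset (Fin n) × Finset (Fin n) → ℂ //
    ∀ p, ¬(p.1 ⊆ refSet n d ∧ p.2 ⊆ (refSet n d)ᶜ ∧ p ≠ (∅, ∅)) → t p = 0}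


namespace CCaux

open MvPolynomial

variable {n d : ℕ}

/-- Index pairs. -/
abbrev Pr (n : ℕ) := Finset (Fin n) × Finset (Fin n)

def valid (n d : ℕ) (p : Pr n) : Prop :=
  p.1 ⊆ refSet n d ∧ p.2 ⊆ (refSet n d)ᶜ ∧ p ≠ (∅, ∅)

instance : DecidablePred (valid n d) := fun p => by unfold valid; infer_instance

def lev (n d : ℕ) (J : Finset (Fin n)) : ℕ :=
  (refSet n d \ J).card + (J \ refSet n d).card

def sz (p : Pr n) : ℕ := p.1.card + p.2.card

def Jof (n d : ℕ) (p : Pr n) : Finset (Fin n) := (refSet n d \ p.1) ∪ p.2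

lemma ann_chain (n : ℕ) (l : List (Fin n)) (hl : l.Nodup) (S : Finset (Fin n)) :
    ∃ ε : ℂ, ε ≠ 0 ∧ ∀ K, ((l.map (annMat n)).prod) K S =
      if l.toFinset ⊆ S ∧ K = S \ l.toFinset then ε else 0 := by
  induction l with
  | nil =>
    refine ⟨1, one_ne_zero, fun K => ?_⟩
    simp [Matrix.one_apply]
  | cons a l ih =>
    obtain ⟨ε, hε, hcol⟩ := ih hl.of_cons
    have hal : a ∉ l := (List.nodup_cons.mp hl).1
    refine ⟨(-1 : ℂ) ^ (((S \ l.toFinset).filter (· < a)).card) * ε,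
      mul_ne_zero (pow_ne_zero _ (by norm_num)) hε, fun K => ?_⟩
    rw [List.map_cons, List.prod_cons, Matrix.mul_apply]
    by_cases hsub : l.toFinset ⊆ S
    · have step : ∀ L, annMat n a K L *
          (List.map (annMat n) l).prod L S =
          if L = S \ l.toFinset then annMat n a K L * ε else 0 := by
        intro L
        rw [hcol L]
        by_cases h : L = S \ l.toFinset
        · rw [if_pos ⟨hsub, h⟩, if_pos h]
        · rw [if_neg (fun hh => h hh.2), mul_zero, if_neg h]
      rw [Finset.sum_congr rfl (fun L _ => step L), Finset.sum_ite_eq']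
      simp only [Finset.mem_univ, if_true]
      rw [annMat]
      by_cases ha : a ∈ S
      · have h1 : a ∈ S \ l.toFinset := Finset.mem_sdiff.mpr ⟨ha, fun h => hal (List.mem_toFinset.mp h)⟩
        have h2 : (insert a l.toFinset : Finset (Fin n)) ⊆ S := Finset.insert_subset ha hsub
        have h3 : (S \ l.toFinset).erase a = S \ insert a l.toFinset := (Finset.sdiff_insert S l.toFinset a).symm
        by_cases hK : K = S \ insert a l.toFinset
        · rw [if_pos ⟨h1, by rw [hK, ← h3]⟩, if_pos (by simpa using ⟨h2, hK⟩)]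
        · rw [if_neg (fun h => hK (by rw [h.2, h3])), zero_mul, if_neg (by simp [hK])]
      · have h2 : ¬ ((insert a l.toFinset : Finset (Fin n)) ⊆ S) := by
          intro h; exact ha (h (Finset.mem_insert_self a _))
        have h1 : a ∉ S \ l.toFinset := fun h => ha (Finset.mem_sdiff.mp h).1
        rw [if_neg (fun h => h1 h.1), zero_mul, if_neg (by simp [h2])]
    · have h2 : ¬ ((insert a l.toFinset : Finset (Fin n)) ⊆ S) := by
        intro h; exact hsub ((Finset.subset_insert a _).trans h)
      rw [Finset.sum_eq_zero, if_neg (by simp [h2])]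
      intro L _
      rw [hcol L, if_neg (fun h => hsub h.1), mul_zero]

lemma cre_chain (n : ℕ) (l : List (Fin n)) (hl : l.Nodup) (S : Finset (Fin n)) :
    ∃ ε : ℂ, ε ≠ 0 ∧ ∀ K, ((l.map (creMat n)).prod) K S =
      if (∀ x ∈ l.toFinset, x ∉ S) ∧ K = S ∪ l.toFinset then ε else 0 := by
  induction l with
  | nil =>
    refine ⟨1, one_ne_zero, fun K => ?_⟩
    simp [Matrix.one_apply]
  | cons a l ih =>
    obtain ⟨ε, hε, hcol⟩ := ih hl.of_cons
    have hal : a ∉ l := (List.nodup_cons.mp hl).1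
    refine ⟨(-1 : ℂ) ^ (((S ∪ l.toFinset).filter (· < a)).card) * ε,
      mul_ne_zero (pow_ne_zero _ (by norm_num)) hε, fun K => ?_⟩
    rw [List.map_cons, List.prod_cons, Matrix.mul_apply]
    by_cases hdis : ∀ x ∈ l.toFinset, x ∉ S
    · have step : ∀ L, creMat n a K L *
          (List.map (creMat n) l).prod L S =
          if L = S ∪ l.toFinset then creMat n a K L * ε else 0 := by
        intro L
        rw [hcol L]
        by_cases h : L = S ∪ l.toFinset
        · rw [if_pos ⟨hdis, h⟩, if_pos h]
        · rw [if_neg (fun hh => h hh.2), mul_zero, if_neg h]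
      rw [Finset.sum_congr rfl (fun L _ => step L), Finset.sum_ite_eq']
      simp only [Finset.mem_univ, if_true]
      rw [creMat]
      by_cases ha : a ∈ S
      · have h1 : a ∈ S ∪ l.toFinset := Finset.mem_union_left _ ha
        have h2 : ¬ (∀ x ∈ (insert a l.toFinset : Finset (Fin n)), x ∉ S) := by
          push_neg; exact ⟨a, Finset.mem_insert_self a _, ha⟩
        rw [if_neg (fun h => h.1 h1), zero_mul, if_neg (by simp only [List.toFinset_cons]; tauto)]
      · have h1 : a ∉ S ∪ l.toFinset := by
          simp only [Finset.mem_union, List.mem_toFinset]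
          push_neg; exact ⟨ha, hal⟩
        have h2 : (∀ x ∈ (insert a l.toFinset : Finset (Fin n)), x ∉ S) ↔ True := by
          simp only [iff_true]
          intro x hx
          rcases Finset.mem_insert.mp hx with rfl | hx
          · exact ha
          · exact hdis x hx
        have h3 : insert a (S ∪ l.toFinset) = S ∪ insert a l.toFinset := by
          rw [Finset.union_insert]
        by_cases hK : K = S ∪ insert a l.toFinset
        · rw [if_pos ⟨h1, by rw [hK, ← h3]⟩, if_pos (by simp only [List.toFinset_cons]; rw [h2]; exact ⟨trivial, hK⟩)]
        · rw [if_neg (fun h => hK (by rw [h.2, h3])), zero_mul, if_neg (by simp only [List.toFinset_cons]; tauto)]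
    · have h2 : ¬ (∀ x ∈ (insert a l.toFinset : Finset (Fin n)), x ∉ S) := by
        intro h; exact hdis (fun x hx => h x (Finset.mem_insert_of_mem hx))
      rw [Finset.sum_eq_zero, if_neg (by simp only [List.toFinset_cons]; tauto)]
      intro L _
      rw [hcol L, if_neg (fun h => hdis h.1), mul_zero]

lemma exMon_col (n : ℕ) (I B S : Finset (Fin n)) :
    ∃ ε : ℂ, ε ≠ 0 ∧ ∀ K, exMon n I B K S =
      if I ⊆ S ∧ (∀ b ∈ B, b ∉ S \ I) ∧ K = (S \ I) ∪ B then ε else 0 := by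
  obtain ⟨εa, ha, hacol⟩ := ann_chain n (I.sort (· ≤ ·)) (I.sort_nodup _) S
  obtain ⟨εc, hc, hccol⟩ := cre_chain n ((B.sort (· ≤ ·)).reverse)
    (List.nodup_reverse.mpr (B.sort_nodup _)) (S \ I)
  simp only [Finset.sort_toFinset] at hacol
  simp only [List.toFinset_reverse, Finset.sort_toFinset] at hccol
  refine ⟨εc * εa, mul_ne_zero hc ha, fun K => ?_⟩
  rw [exMon, Matrix.mul_apply]
  by_cases hIS : I ⊆ S
  · have step : ∀ L, (List.map (creMat n) (B.sort (· ≤ ·)).reverse).prod K L *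
        (List.map (annMat n) (I.sort (· ≤ ·))).prod L S =
        if L = S \ I then (List.map (creMat n) (B.sort (· ≤ ·)).reverse).prod K L * εa else 0 := by
      intro L
      rw [hacol L]
      by_cases h : L = S \ I
      · rw [if_pos ⟨hIS, h⟩, if_pos h]
      · rw [if_neg (fun hh => h hh.2), mul_zero, if_neg h]
    rw [Finset.sum_congr rfl (fun L _ => step L), Finset.sum_ite_eq']
    simp only [Finset.mem_univ, if_true]
    rw [hccol K]
    by_cases hB : ∀ b ∈ B, b ∉ S \ I
    · by_cases hK : K = (S \ I) ∪ B
      · rw [if_pos ⟨hB, by rw [hK]⟩, if_pos ⟨hIS, hB, hK⟩]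
      · rw [if_neg (fun h => hK h.2), zero_mul, if_neg (fun h => hK h.2.2)]
    · rw [if_neg (fun h => hB h.1), zero_mul, if_neg (fun h => hB h.2.1)]
  · rw [Finset.sum_eq_zero, if_neg (fun h => hIS h.1)]
    intro L _
    rw [hacol L, if_neg (fun h => hIS h.1), mul_zero]

lemma exMon_ne_zero {n : ℕ} {I B K S : Finset (Fin n)} (h : exMon n I B K S ≠ 0) :
    I ⊆ S ∧ (∀ b ∈ B, b ∉ S \ I) ∧ K = (S \ I) ∪ B := by
  obtain ⟨ε, _, hcol⟩ := exMon_col n I B S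
  by_contra hc
  exact h (by rw [hcol K, if_neg hc])

lemma sz_pos {p : Pr n} (hp : valid n d p) : 1 ≤ sz p := by
  rcases Nat.eq_zero_or_pos (sz p) with h | h
  · exfalso
    rw [sz] at h
    exact hp.2.2 (Prod.ext (Finset.card_eq_zero.mp (by omega)) (Finset.card_eq_zero.mp (by omega)))
  · exact h

lemma n_pos {p : Pr n} (hp : valid n d p) : 1 ≤ n := by
  have h := sz_pos (d := d) hp
  rw [sz] at h
  rcases Nat.eq_zero_or_pos n with rfl | h'
  · have h1 : (p.1 : Finset (Fin 0)) = ∅ := Finset.eq_empty_of_isEmpty _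
    have h2 : (p.2 : Finset (Fin 0)) = ∅ := Finset.eq_empty_of_isEmpty _
    rw [h1, h2] at h; simp at h
  · exact h'

lemma mem_refSet_compl {x : Fin n} {B : Finset (Fin n)} (hB : B ⊆ (refSet n d)ᶜ)
    (hx : x ∈ B) : x ∉ refSet n d := by
  have := hB hx
  simpa [Finset.mem_compl] using this

lemma helper1 {α : Type*} [DecidableEq α] (R S I B K : Finset α)
    (hK : K = (S \ I) ∪ B)
    (hIR : I ⊆ R) (a2 : ∀ x, x ∈ B → x ∉ R) (hIS : I ⊆ S)
    (a4 : ∀ x, x ∈ B → ¬(x ∈ S ∧ x ∉ I)) :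
    R \ K = (R \ S) ∪ I := by
  ext x
  have b1 : x ∈ I → x ∈ R := fun h => hIR h
  have b2 : x ∈ B → x ∉ R := a2 x
  have b3 : x ∈ I → x ∈ S := fun h => hIS h
  have b4 : x ∈ B → ¬(x ∈ S ∧ x ∉ I) := a4 x
  rw [hK]
  simp only [Finset.mem_sdiff, Finset.mem_union, not_or, Finset.mem_sdiff]
  tauto

lemma helper2 {α : Type*} [DecidableEq α] (R S I B K : Finset α)
    (hK : K = (S \ I) ∪ B)
    (hIR : I ⊆ R) (a2 : ∀ x, x ∈ B → x ∉ R) :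
    K \ R = (S \ R) ∪ B := by
  ext x
  have b1 : x ∈ I → x ∈ R := fun h => hIR h
  have b2 : x ∈ B → x ∉ R := a2 x
  rw [hK]
  simp only [Finset.mem_sdiff, Finset.mem_union]
  tauto

lemma lev_of_exMon {p : Pr n} {K S : Finset (Fin n)} (hp : valid n d p)
    (h : exMon n p.1 p.2 K S ≠ 0) : lev n d K = lev n d S + sz p := by
  obtain ⟨hIS, hBd, hK⟩ := exMon_ne_zero h
  obtain ⟨hIR, hBR, -⟩ := hp
  set R := refSet n d with hR
  have a2 : ∀ x, x ∈ p.2 → x ∉ R := fun x h => mem_refSet_compl hBR h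
  have a4 : ∀ x, x ∈ p.2 → ¬(x ∈ S ∧ x ∉ p.1) :=
    fun x h hc => hBd x h (Finset.mem_sdiff.mpr hc)
  have h1 : R \ K = (R \ S) ∪ p.1 := helper1 R S p.1 p.2 K hK hIR a2 hIS a4
  have h2 : K \ R = (S \ R) ∪ p.2 := helper2 R S p.1 p.2 K hK hIR a2
  have d1 : Disjoint (R \ S) p.1 := by
    rw [Finset.disjoint_right]
    intro x hx hx'
    exact (Finset.mem_sdiff.mp hx').2 (hIS hx)
  have d2 : Disjoint (S \ R) p.2 := by
    rw [Finset.disjoint_right]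
    intro x hx hx'
    obtain ⟨hxS, hxR⟩ := Finset.mem_sdiff.mp hx'
    exact hBd x hx (Finset.mem_sdiff.mpr ⟨hxS, fun h => hxR (hIR h)⟩)
  rw [lev, lev, sz, h1, h2, Finset.card_union_of_disjoint d1, Finset.card_union_of_disjoint d2]
  ring

lemma Jof_sdiff₁ {p : Pr n} (hp : valid n d p) : refSet n d \ Jof n d p = p.1 := by
  obtain ⟨hIR, hBR, -⟩ := hp
  have a2 : ∀ x, x ∈ p.2 → x ∉ refSet n d := fun x h => mem_refSet_compl hBR h
  have a4 : ∀ x, x ∈ p.2 → ¬(x ∈ refSet n d ∧ x ∉ p.1) := fun x h hc => a2 x h hc.1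
  have h1 := helper1 (refSet n d) (refSet n d) p.1 p.2 (Jof n d p) rfl hIR a2 hIR a4
  rw [h1, Finset.sdiff_self, Finset.empty_union]

lemma Jof_sdiff₂ {p : Pr n} (hp : valid n d p) : Jof n d p \ refSet n d = p.2 := by
  obtain ⟨hIR, hBR, -⟩ := hp
  have a2 : ∀ x, x ∈ p.2 → x ∉ refSet n d := fun x h => mem_refSet_compl hBR h
  have h2 := helper2 (refSet n d) (refSet n d) p.1 p.2 (Jof n d p) rfl hIR a2
  rw [h2, Finset.sdiff_self, Finset.empty_union]

lemma lev_Jof {p : Pr n} (hp : valid n d p) : lev n d (Jof n d p) = sz p := by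
  rw [lev, Jof_sdiff₁ hp, Jof_sdiff₂ hp, sz]

lemma lev_refSet : lev n d (refSet n d) = 0 := by simp [lev]

lemma Jof_ne_refSet {p : Pr n} (hp : valid n d p) : Jof n d p ≠ refSet n d := by
  intro h
  have h1 := lev_Jof hp
  rw [h, lev_refSet] at h1
  have := sz_pos hp
  omega

lemma Jof_inj {p q : Pr n} (hp : valid n d p) (hq : valid n d q)
    (h : Jof n d p = Jof n d q) : p = q := by
  have h1 : p.1 = q.1 := by rw [← Jof_sdiff₁ hp, ← Jof_sdiff₁ hq, h]
  have h2 : p.2 = q.2 := by rw [← Jof_sdiff₂ hp, ← Jof_sdiff₂ hq, h]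
  exact Prod.ext h1 h2

noncomputable def epsC (n d : ℕ) (p : Pr n) : ℂ :=
  exMon n p.1 p.2 (Jof n d p) (refSet n d)

lemma exMon_ref_col {p : Pr n} (hp : valid n d p) (K : Finset (Fin n)) :
    exMon n p.1 p.2 K (refSet n d) = if K = Jof n d p then epsC n d p else 0 := by
  obtain ⟨ε, hε, hcol⟩ := exMon_col n p.1 p.2 (refSet n d)
  obtain ⟨hIR, hBR, -⟩ := hp
  have hB : ∀ b ∈ p.2, b ∉ refSet n d \ p.1 :=
    fun b hb hc => mem_refSet_compl hBR hb (Finset.mem_sdiff.mp hc).1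
  have hJ : Jof n d p = refSet n d \ p.1 ∪ p.2 := rfl
  have heps : epsC n d p = ε := by rw [epsC, hcol, if_pos ⟨hIR, hB, hJ⟩]
  rw [hcol K, heps]
  by_cases hK : K = Jof n d p
  · rw [if_pos ⟨hIR, hB, hK.trans hJ⟩, if_pos hK]
  · rw [if_neg (fun h => hK (h.2.2.trans hJ.symm)), if_neg hK]

lemma epsC_ne_zero {p : Pr n} (hp : valid n d p) : epsC n d p ≠ 0 := by
  obtain ⟨ε, hε, hcol⟩ := exMon_col n p.1 p.2 (refSet n d)
  obtain ⟨hIR, hBR, -⟩ := hp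
  have hB : ∀ b ∈ p.2, b ∉ refSet n d \ p.1 :=
    fun b hb hc => mem_refSet_compl hBR hb (Finset.mem_sdiff.mp hc).1
  rw [epsC, hcol, if_pos ⟨hIR, hB, rfl⟩]
  exact hε

noncomputable def TP (n d : ℕ) : Matrix (Finset (Fin n)) (Finset (Fin n)) (MvPolynomial (Pr n) ℂ) :=
  ∑ p ∈ Finset.univ.filter (valid n d),
    (MvPolynomial.X p : MvPolynomial (Pr n) ℂ) • (exMon n p.1 p.2).map MvPolynomial.C

lemma TP_apply (J K : Finset (Fin n)) :
    TP n d J K = ∑ p ∈ Finset.univ.filter (valid n d),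
      MvPolynomial.C (exMon n p.1 p.2 J K) * MvPolynomial.X p := by
  rw [TP, Matrix.sum_apply]
  refine Finset.sum_congr rfl fun p _ => ?_
  simp [Matrix.smul_apply, Matrix.map_apply, smul_eq_mul, mul_comm]

lemma clusterMat_eq (t : Pr n → ℂ) :
    clusterMat n d t = ∑ p ∈ Finset.univ.filter (valid n d), t p • exMon n p.1 p.2 := by
  rw [clusterMat]
  apply Finset.sum_congr
  · ext p
    simp [valid]
  · intros; rfl

lemma map_TP (t : Pr n → ℂ) :
    (TP n d).map (MvPolynomial.eval t) = clusterMat n d t := by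
  ext J K
  rw [Matrix.map_apply, TP_apply, map_sum, clusterMat_eq, Matrix.sum_apply]
  refine Finset.sum_congr rfl fun p _ => ?_
  simp [Matrix.smul_apply, smul_eq_mul, mul_comm]

lemma map_TP_pow (t : Pr n → ℂ) (k : ℕ) :
    (TP n d ^ k).map (MvPolynomial.eval t) = clusterMat n d t ^ k := by
  have h := map_pow ((MvPolynomial.eval t).mapMatrix :
    Matrix (Finset (Fin n)) (Finset (Fin n)) (MvPolynomial (Pr n) ℂ) →+*
      Matrix (Finset (Fin n)) (Finset (Fin n)) ℂ) (TP n d) k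
  simpa [RingHom.mapMatrix_apply, map_TP] using h

noncomputable def PsiP (n d : ℕ) (J : Finset (Fin n)) : MvPolynomial (Pr n) ℂ :=
  ∑ k ∈ Finset.range (n + 1),
    MvPolynomial.C ((k.factorial : ℂ))⁻¹ * ((TP n d ^ k) J (refSet n d))

lemma eval_PsiP (t : Pr n → ℂ) (J : Finset (Fin n)) :
    MvPolynomial.eval t (PsiP n d J) = ccPsi n d t J := by
  rw [PsiP, map_sum, ccPsi, expMat, Matrix.sum_apply]
  refine Finset.sum_congr rfl fun k _ => ?_
  have h : MvPolynomial.eval t ((TP n d ^ k) J (refSet n d)) =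
      (clusterMat n d t ^ k) J (refSet n d) := by
    rw [← map_TP_pow t k, Matrix.map_apply]
  rw [map_mul, MvPolynomial.eval_C, h, Matrix.smul_apply, smul_eq_mul]

lemma master (n d : ℕ) (k : ℕ) : ∀ (S J : Finset (Fin n)),
    (∀ q ∈ ((TP n d ^ k) J S).vars, valid n d q ∧ lev n d S + sz q + k ≤ lev n d J + 1)
    ∧ (lev n d J < lev n d S + k → (TP n d ^ k) J S = 0) := by
  induction k with
  | zero =>
    intro S J
    constructor
    · intro q hq
      rw [pow_zero, Matrix.one_apply] at hq
      by_cases h : J = S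
      · rw [if_pos h] at hq
        simp [MvPolynomial.vars_one] at hq
      · rw [if_neg h] at hq
        simp [MvPolynomial.vars_0] at hq
    · intro hlt
      rw [pow_zero, Matrix.one_apply, if_neg]
      intro h
      rw [h] at hlt
      omega
  | succ k ih =>
    intro S J
    have hentry : (TP n d ^ (k + 1)) J S =
        ∑ K : Finset (Fin n), ∑ p ∈ Finset.univ.filter (valid n d),
          MvPolynomial.C (exMon n p.1 p.2 J K) * MvPolynomial.X p * ((TP n d ^ k) K S) := by
      rw [pow_succ', Matrix.mul_apply]
      refine Finset.sum_congr rfl fun K _ => ?_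
      rw [TP_apply, Finset.sum_mul]
    constructor
    · intro q hq
      rw [hentry] at hq
      obtain ⟨K, -, hq⟩ := Finset.mem_biUnion.mp (MvPolynomial.vars_sum_subset _ _ hq)
      obtain ⟨p, hpmem, hq⟩ := Finset.mem_biUnion.mp (MvPolynomial.vars_sum_subset _ _ hq)
      have hpv : valid n d p := (Finset.mem_filter.mp hpmem).2
      by_cases he : exMon n p.1 p.2 J K = 0
      · rw [he] at hq
        simp [MvPolynomial.vars_0] at hq
      by_cases hQ : (TP n d ^ k) K S = 0
      · rw [hQ, mul_zero] at hq
        simp [MvPolynomial.vars_0] at hq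
      have hlev : lev n d J = lev n d K + sz p := lev_of_exMon hpv he
      have hKS : lev n d S + k ≤ lev n d K := by
        by_contra hcon
        exact hQ ((ih S K).2 (by omega))
      have hszp : 1 ≤ sz p := sz_pos hpv
      have hsub := MvPolynomial.vars_mul
        (MvPolynomial.C (exMon n p.1 p.2 J K) * MvPolynomial.X p) ((TP n d ^ k) K S) hq
      rcases Finset.mem_union.mp hsub with h1 | h2
      · have hsub2 := MvPolynomial.vars_mul
          (MvPolynomial.C (exMon n p.1 p.2 J K)) (MvPolynomial.X p) h1
        rcases Finset.mem_union.mp hsub2 with h3 | h4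
        · rw [MvPolynomial.vars_C] at h3
          exact absurd h3 (Finset.notMem_empty q)
        · rw [MvPolynomial.vars_X] at h4
          have : q = p := Finset.mem_singleton.mp h4
          subst this
          exact ⟨hpv, by omega⟩
      · obtain ⟨hqv, hb⟩ := (ih S K).1 q h2
        exact ⟨hqv, by omega⟩
    · intro hlt
      rw [hentry]
      apply Finset.sum_eq_zero
      intro K _
      apply Finset.sum_eq_zero
      intro p hpmem
      have hpv : valid n d p := (Finset.mem_filter.mp hpmem).2
      by_cases he : exMon n p.1 p.2 J K = 0
      · rw [he]
        simp
      have hlev : lev n d J = lev n d K + sz p := lev_of_exMon hpv he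
      have hszp : 1 ≤ sz p := sz_pos hpv
      have hQ : (TP n d ^ k) K S = 0 := (ih S K).2 (by omega)
      rw [hQ, mul_zero]

lemma PsiP_refSet : PsiP n d (refSet n d) = 1 := by
  rw [PsiP, Finset.sum_eq_single 0]
  · rw [pow_zero, Matrix.one_apply_eq]
    simp
  · intro k _ hk
    rw [(master n d k (refSet n d) (refSet n d)).2 (by omega), mul_zero]
  · intro h
    exact absurd (Finset.mem_range.mpr (by omega)) h

noncomputable def Phi (n d : ℕ) (p : Pr n) : MvPolynomial (Pr n) ℂ :=
  ∑ k ∈ Finset.Icc 2 n,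
    MvPolynomial.C ((k.factorial : ℂ))⁻¹ * ((TP n d ^ k) (Jof n d p) (refSet n d))

lemma TP_ref {p : Pr n} (hp : valid n d p) :
    TP n d (Jof n d p) (refSet n d) = MvPolynomial.C (epsC n d p) * MvPolynomial.X p := by
  rw [TP_apply, Finset.sum_eq_single p]
  · rw [exMon_ref_col hp, if_pos rfl]
  · intro q hq hqp
    have hqv : valid n d q := (Finset.mem_filter.mp hq).2
    rw [exMon_ref_col hqv, if_neg, MvPolynomial.C_0, zero_mul]
    intro h
    exact hqp (Jof_inj hqv hp h.symm)
  · intro h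
    exact absurd (Finset.mem_filter.mpr ⟨Finset.mem_univ p, hp⟩) h

lemma PsiP_decomp {p : Pr n} (hp : valid n d p) :
    PsiP n d (Jof n d p) =
      MvPolynomial.C (epsC n d p) * MvPolynomial.X p + Phi n d p := by
  have hn : 1 ≤ n := n_pos hp
  have hrange : Finset.range (n + 1) = insert 0 (insert 1 (Finset.Icc 2 n)) := by
    ext k
    simp only [Finset.mem_range, Finset.mem_insert, Finset.mem_Icc]
    omega
  have h0 : (0 : ℕ) ∉ insert 1 (Finset.Icc 2 n) := by simp
  have h1 : (1 : ℕ) ∉ Finset.Icc 2 n := by simp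
  rw [PsiP, hrange, Finset.sum_insert h0, Finset.sum_insert h1]
  have hz : (TP n d ^ 0) (Jof n d p) (refSet n d) = 0 := by
    rw [pow_zero, Matrix.one_apply, if_neg (Jof_ne_refSet hp)]
  have ho : (TP n d ^ 1) (Jof n d p) (refSet n d) =
      MvPolynomial.C (epsC n d p) * MvPolynomial.X p := by
    rw [pow_one, TP_ref hp]
  rw [hz, ho, mul_zero, zero_add]
  simp [Phi]

lemma Phi_vars {p : Pr n} (hp : valid n d p) :
    ∀ q ∈ (Phi n d p).vars, valid n d q ∧ sz q < sz p := by
  intro q hq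
  rw [Phi] at hq
  obtain ⟨k, hk, hq⟩ := Finset.mem_biUnion.mp (MvPolynomial.vars_sum_subset _ _ hq)
  have hk2 : 2 ≤ k := (Finset.mem_Icc.mp hk).1
  have hsub := MvPolynomial.vars_mul
    (MvPolynomial.C ((k.factorial : ℂ))⁻¹) ((TP n d ^ k) (Jof n d p) (refSet n d)) hq
  rcases Finset.mem_union.mp hsub with h1 | h2
  · rw [MvPolynomial.vars_C] at h1
    exact absurd h1 (Finset.notMem_empty q)
  · obtain ⟨hqv, hb⟩ := (master n d k (refSet n d) (Jof n d p)).1 q h2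
    rw [lev_refSet, lev_Jof hp] at hb
    exact ⟨hqv, by omega⟩

lemma aeval_eq_eval'' {σ : Type*} (f : σ → ℂ) (q : MvPolynomial σ ℂ) :
    MvPolynomial.aeval f q = MvPolynomial.eval f q := by
  rw [MvPolynomial.aeval_def, Algebra.algebraMap_self]
  rfl

lemma eval_aeval' {σ τ : Type*} (f : τ → ℂ) (g : σ → MvPolynomial τ ℂ)
    (φ : MvPolynomial σ ℂ) :
    MvPolynomial.eval f (MvPolynomial.aeval g φ) =
      MvPolynomial.eval (fun i => MvPolynomial.eval f (g i)) φ := by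
  rw [← aeval_eq_eval'' f, MvPolynomial.aeval_eq_bind₁ g, MvPolynomial.aeval_bind₁]
  simp only [aeval_eq_eval'']

lemma eval_congr_vars {σ : Type*} [DecidableEq σ] {f g : σ → ℂ} (q : MvPolynomial σ ℂ)
    (h : ∀ i ∈ q.vars, f i = g i) : MvPolynomial.eval f q = MvPolynomial.eval g q :=
  MvPolynomial.eval₂Hom_congr' rfl (fun i hi _ => h i hi) rfl

noncomputable def Paux (n d : ℕ) : ℕ → Pr n → MvPolynomial (Finset (Fin n)) ℂ
  | 0, _ => 0
  | m + 1, p =>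
    if sz p = m + 1 ∧ valid n d p then
      MvPolynomial.C (epsC n d p)⁻¹ *
        (MvPolynomial.X (Jof n d p) -
          MvPolynomial.aeval (fun q => Paux n d m q) (Phi n d p))
    else Paux n d m p

lemma Paux_zero (p : Pr n) : Paux n d 0 p = 0 := rfl

lemma Paux_succ (m : ℕ) (p : Pr n) :
    Paux n d (m + 1) p =
      if sz p = m + 1 ∧ valid n d p then
        MvPolynomial.C (epsC n d p)⁻¹ *
          (MvPolynomial.X (Jof n d p) -
            MvPolynomial.aeval (fun q => Paux n d m q) (Phi n d p))
      else Paux n d m p := rfl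

lemma Paux_succ_of_le {m : ℕ} {p : Pr n} (h : sz p ≤ m) :
    Paux n d (m + 1) p = Paux n d m p := by
  rw [Paux_succ, if_neg]
  rintro ⟨h1, -⟩
  omega

lemma Paux_stab {p : Pr n} : ∀ {m : ℕ}, sz p ≤ m → Paux n d m p = Paux n d (sz p) p := by
  intro m
  induction m with
  | zero => intro h; have : sz p = 0 := by omega
            rw [this]
  | succ m ih =>
    intro h
    by_cases h' : sz p ≤ m
    · rw [Paux_succ_of_le h']
      exact ih h'
    · have : sz p = m + 1 := by omega
      rw [this]

lemma Paux_vars (n d : ℕ) : ∀ (m : ℕ) (p : Pr n) (J : Finset (Fin n)),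
    J ∈ (Paux n d m p).vars → lev n d J ≤ sz p := by
  intro m
  induction m with
  | zero =>
    intro p J hJ
    rw [Paux_zero, MvPolynomial.vars_0] at hJ
    exact absurd hJ (Finset.notMem_empty J)
  | succ m ih =>
    intro p J hJ
    rw [Paux_succ] at hJ
    split_ifs at hJ with h
    · obtain ⟨hsz, hval⟩ := h
      have hsub := MvPolynomial.vars_mul _ _ hJ
      rcases Finset.mem_union.mp hsub with h1 | h2
      · rw [MvPolynomial.vars_C] at h1
        exact absurd h1 (Finset.notMem_empty J)
      · have hsub2 := MvPolynomial.vars_sub_subset (p := MvPolynomial.X (Jof n d p)) (q := MvPolynomial.aeval (fun q => Paux n d m q) (Phi n d p)) h2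
        rcases Finset.mem_union.mp hsub2 with h3 | h4
        · rw [MvPolynomial.vars_X] at h3
          rw [Finset.mem_singleton.mp h3, lev_Jof hval]
        · rw [MvPolynomial.aeval_eq_bind₁] at h4
          have h5 := MvPolynomial.vars_bind₁ _ _ h4
          obtain ⟨q, hq, hJq⟩ := Finset.mem_biUnion.mp h5
          obtain ⟨hqv, hqs⟩ := Phi_vars hval q hq
          exact le_trans (ih q J hJq) (by omega)
    · exact ih p J hJ

lemma key (n d : ℕ) : ∀ (m : ℕ) (t : Pr n → ℂ) (p : Pr n), valid n d p → sz p ≤ m →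
    t p = MvPolynomial.eval (ccPsi n d t) (Paux n d m p) := by
  intro m
  induction m with
  | zero =>
    intro t p hp hle
    have := sz_pos hp
    omega
  | succ m ih =>
    intro t p hp hle
    by_cases h : sz p ≤ m
    · rw [Paux_succ_of_le h]
      exact ih t p hp h
    · have hsz : sz p = m + 1 := by omega
      rw [Paux_succ, if_pos ⟨hsz, hp⟩, map_mul, MvPolynomial.eval_C, map_sub,
        MvPolynomial.eval_X]
      set ψ := ccPsi n d t with hψ
      have hEv : MvPolynomial.eval ψ
          (MvPolynomial.aeval (fun q => Paux n d m q) (Phi n d p)) =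
          MvPolynomial.eval t (Phi n d p) := by
        rw [eval_aeval']
        apply eval_congr_vars
        intro q hq
        obtain ⟨hqv, hqs⟩ := Phi_vars hp q hq
        exact (ih t q hqv (by omega)).symm
      have hpsi : ψ (Jof n d p) = epsC n d p * t p + MvPolynomial.eval t (Phi n d p) := by
        rw [hψ, ← eval_PsiP, PsiP_decomp hp, map_add, map_mul, MvPolynomial.eval_C,
          MvPolynomial.eval_X]
      rw [hEv, hpsi, add_sub_cancel_right, inv_mul_cancel_left₀ (epsC_ne_zero hp)]

lemma ccPsi_refSet (t : Pr n → ℂ) : ccPsi n d t (refSet n d) = 1 := by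
  rw [← eval_PsiP, PsiP_refSet, map_one]

lemma surj (n d : ℕ) (ψ : Finset (Fin n) → ℂ) (hψ : ψ (refSet n d) = 1) :
    ccPsi n d (fun p => if valid n d p then
      MvPolynomial.eval ψ (Paux n d (sz p) p) else 0) = ψ := by
  set t : Pr n → ℂ := fun p => if valid n d p then
    MvPolynomial.eval ψ (Paux n d (sz p) p) else 0 with ht
  funext J
  rw [← eval_PsiP t J]
  by_cases hJ : J = refSet n d
  · rw [hJ, PsiP_refSet, map_one, hψ]
  · set p : Pr n := (refSet n d \ J, J \ refSet n d) with hpdef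
    have hval : valid n d p := by
      refine ⟨Finset.sdiff_subset, ?_, ?_⟩
      · intro x hx
        rw [Finset.mem_compl]
        exact (Finset.mem_sdiff.mp hx).2
      · intro h
        apply hJ
        have h1 : refSet n d \ J = ∅ := congrArg Prod.fst h
        have h2 : J \ refSet n d = ∅ := congrArg Prod.snd h
        exact Finset.Subset.antisymm
          (Finset.sdiff_eq_empty_iff_subset.mp h2)
          (Finset.sdiff_eq_empty_iff_subset.mp h1)
    have hJof : Jof n d p = J := by
      rw [Jof]
      ext x
      simp only [Finset.mem_union, Finset.mem_sdiff]
      by_cases hxR : x ∈ refSet n d <;> by_cases hxJ : x ∈ J <;> simp [hpdef, hxR, hxJ]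
    obtain ⟨m, hm⟩ : ∃ m, sz p = m + 1 := ⟨sz p - 1, by have := sz_pos hval; omega⟩
    have htp : t p = (epsC n d p)⁻¹ *
        (ψ J - MvPolynomial.eval (fun q => MvPolynomial.eval ψ (Paux n d m q))
          (Phi n d p)) := by
      rw [ht]
      simp only [if_pos hval]
      rw [hm, Paux_succ, if_pos ⟨hm, hval⟩, map_mul, MvPolynomial.eval_C, map_sub,
        MvPolynomial.eval_X, eval_aeval', hJof]
    have hE : MvPolynomial.eval t (Phi n d p) =
        MvPolynomial.eval (fun q => MvPolynomial.eval ψ (Paux n d m q)) (Phi n d p) := by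
      apply eval_congr_vars
      intro q hq
      obtain ⟨hqv, hqs⟩ := Phi_vars hval q hq
      show (if valid n d q then MvPolynomial.eval ψ (Paux n d (sz q) q) else 0) = _
      rw [if_pos hqv, Paux_stab (show sz q ≤ m by omega)]
    rw [← hJof, PsiP_decomp hval, map_add, map_mul, MvPolynomial.eval_C,
      MvPolynomial.eval_X, hE, hJof, htp,
      mul_inv_cancel_left₀ (epsC_ne_zero hval), sub_add_cancel]

end CCaux

open CCaux in
/-- The exponential parametrization is a bijection from cluster amplitudes onto the
affine chart `{ψ_{[d]} = 1}`, and each inverse coordinate `t_{I,B}` is a polynomial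
in the `ψ`-coordinates of level at most the level of `(I,B)`. -/
theorem stmt_12 (n d : ℕ) (hdn : d ≤ n) :
    Function.Injective (fun t : Amplitudes n d => ccPsi n d t.1)
    ∧ Set.range (fun t : Amplitudes n d => ccPsi n d t.1) =
        {ψ : Finset (Fin n) → ℂ | ψ (refSet n d) = 1}
    ∧ ∃ P : Finset (Fin n) × Finset (Fin n) → MvPolynomial (Finset (Fin n)) ℂ,
        ∀ (t : Amplitudes n d) (p : Finset (Fin n) × Finset (Fin n)),
          (p.1 ⊆ refSet n d ∧ p.2 ⊆ (refSet n d)ᶜ ∧ p ≠ (∅, ∅)) →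
            t.1 p = MvPolynomial.eval (ccPsi n d t.1) (P p)
            ∧ ∀ J ∈ (P p).vars,
                (refSet n d \ J).card + (J \ refSet n d).card ≤ p.1.card + p.2.card := by
  refine ⟨?_, ?_, ?_⟩
  · intro t t' h
    have h' : ccPsi n d t.1 = ccPsi n d t'.1 := h
    apply Subtype.ext
    funext p
    by_cases hp : valid n d p
    · rw [key n d (sz p) t.1 p hp le_rfl, key n d (sz p) t'.1 p hp le_rfl, h']
    · rw [t.2 p hp, t'.2 p hp]
  · ext ψ
    constructor
    · rintro ⟨t, rfl⟩
      exact ccPsi_refSet t.1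
    · intro hψ
      refine ⟨⟨fun p => if valid n d p then
        MvPolynomial.eval ψ (Paux n d (sz p) p) else 0, ?_⟩, ?_⟩
      · intro p hp
        exact if_neg (fun hv => hp hv)
      · exact surj n d ψ hψ
  · refine ⟨fun p => Paux n d (sz p) p, fun t p hp => ⟨?_, ?_⟩⟩
    · exact key n d (sz p) t.1 p hp le_rfl
    · intro J hJ
      exact Paux_vars n d (sz p) p J hJ
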